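/- For every non-zero real x and every real c > 0, e^{2πix} = lim_{θ → (π/2)^−} (1/(2πi)) ∫_{Re(t) = c} |2πx|^{−t} e^{i t θ sign(x)} Γ(t) dt, where the integral is over the vertical line t = c + is, s ∈ ℝ, and for each fixed 0 < θ < π/2 the integral converges absolutely. -/

import Mathlib

open MeasureTheory Set Complex Filter Real

lemma intOn_real {b r : ℝ} (hb : -1 < b) (hr : 0 < r) :
    IntegrableOn (fun y : ℝ => y ^ b * Real.exp (-r * y)) (Ioi 0) := by
  have h0 : IntegrableOn (fun y : ℝ => Real.exp (-y) * y ^ b) (Ioi 0) := by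
    have := Real.GammaIntegral_convergent (s := b + 1) (by linarith)
    simpa using this
  have h1 : IntegrableOn (fun x : ℝ => Real.exp (-(r * x)) * (r * x) ^ b) (Ioi 0) := by
    have := (integrableOn_Ioi_comp_mul_left_iff (fun y : ℝ => Real.exp (-y) * y ^ b) 0 hr).mpr
      (by simpa using h0)
    simpa using this
  refine IntegrableOn.congr_fun (h1.const_mul (r ^ b)⁻¹) (fun y hy => ?_) measurableSet_Ioi
  rw [mem_Ioi] at hy
  rw [Real.mul_rpow hr.le hy.le]
  field_simp [Real.rpow_pos_of_pos hr b |>.ne']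

lemma int_aux {b r : ℝ} (hb : 0 < b) (hr : 0 < r) :
    Integrable (fun u : ℝ => Real.exp (-b * u - r * Real.exp (-u))) := by
  have hcont : Continuous fun u : ℝ => Real.exp (-b * u - r * Real.exp (-u)) := by
    continuity
  have h1 : IntegrableOn (fun u : ℝ => Real.exp (-b * u - r * Real.exp (-u))) (Ici 0) := by
    refine (Integrable.mono' ((exp_neg_integrableOn_Ioi 0 hb).congr_set_ae Ioi_ae_eq_Ici.symm)
      hcont.aestronglyMeasurable.restrict ?_)
    filter_upwards with u
    rw [Real.norm_eq_abs, Real.abs_exp, Real.exp_le_exp]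
    nlinarith [Real.exp_pos (-u)]
  have h2 : IntegrableOn (fun u : ℝ => Real.exp (-b * u - r * Real.exp (-u))) (Iio 0) := by
    have hint : IntegrableOn (fun u : ℝ => Real.exp ((b+1)^2 / r) * Real.exp u) (Iio 0) := by
      exact ((integrableOn_exp_Iic 0).mono_set Iio_subset_Iic_self).const_mul _
    refine Integrable.mono' hint hcont.aestronglyMeasurable.restrict ?_
    filter_upwards [ae_restrict_mem measurableSet_Iio] with u (hu : u < 0)
    rw [Real.norm_eq_abs, Real.abs_exp, ← Real.exp_add, Real.exp_le_exp]
    -- -b*u - r*exp(-u) ≤ (b+1)^2/r + u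
    have h3 : Real.exp (-u) = Real.exp (-u/2) * Real.exp (-u/2) := by
      rw [← Real.exp_add]; ring_nf
    have h4 : (-u/2) + 1 ≤ Real.exp (-u/2) := Real.add_one_le_exp _
    have h5 : (-u)^2/4 ≤ Real.exp (-u) := by nlinarith
    have key : (-b*u - r*Real.exp (-u)) * r ≤ ((b+1)^2/r + u) * r := by
      have hdiv : (b+1)^2/r * r = (b+1)^2 := div_mul_cancel₀ _ hr.ne'
      nlinarith [sq_nonneg (b+1+r*u/2), mul_le_mul_of_nonneg_left h5 (mul_nonneg hr.le hr.le)]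
    exact (mul_le_mul_iff_left₀ hr).mp key
  have : Iio (0:ℝ) ∪ Ici 0 = univ := Iio_union_Ici
  rw [← integrableOn_univ, ← this]
  exact h2.union h1

lemma meas_aux (s a : ℂ) :
    AEStronglyMeasurable (fun y : ℝ => (y : ℂ) ^ (s - 1) * Complex.exp (-a * y))
      (volume.restrict (Ioi 0)) := by
  refine ContinuousOn.aestronglyMeasurable ?_ measurableSet_Ioi
  refine ContinuousOn.mul ?_ ((Complex.continuous_exp.comp
    ((continuous_const.mul Complex.continuous_ofReal))).continuousOn)
  apply continuousOn_of_forall_continuousAt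
  intro y hy
  exact (_root_.continuousAt_cpow_const (Complex.ofReal_mem_slitPlane.2 hy)).comp
    Complex.continuous_ofReal.continuousAt

lemma norm_aux {s a : ℂ} {y : ℝ} (hy : 0 < y) :
    ‖(y : ℂ) ^ (s - 1) * Complex.exp (-a * y)‖ = y ^ (s.re - 1) * Real.exp (-a.re * y) := by
  rw [norm_mul, Complex.norm_exp,
    Complex.norm_cpow_eq_rpow_re_of_pos hy]
  simp [Complex.sub_re]

lemma intOn_complex {s a : ℂ} (hs : 0 < s.re) (ha : 0 < a.re) :
    IntegrableOn (fun y : ℝ => (y : ℂ) ^ (s - 1) * Complex.exp (-a * y)) (Ioi 0) := by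
  refine Integrable.mono' (intOn_real (by linarith : (-1:ℝ) < s.re - 1) ha) (meas_aux s a) ?_
  filter_upwards [ae_restrict_mem measurableSet_Ioi] with y hy
  rw [norm_aux hy]

lemma gamma_int {s : ℂ} (hs : 0 < s.re) :
    ∀ a : ℂ, 0 < a.re →
      ∫ y : ℝ in Ioi 0, (y : ℂ) ^ (s - 1) * Complex.exp (-a * y) = a ^ (-s) * Complex.Gamma s := by
  set F : ℂ → ℂ := fun a => ∫ y : ℝ in Ioi 0, (y : ℂ) ^ (s - 1) * Complex.exp (-a * y) with hF
  set G : ℂ → ℂ := fun a => a ^ (-s) * Complex.Gamma s with hG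
  set U : Set ℂ := {a : ℂ | 0 < a.re} with hU
  have hUopen : IsOpen U := isOpen_lt continuous_const Complex.continuous_re
  have hFdiff : DifferentiableOn ℂ F U := by
    intro a₀ ha₀
    refine DifferentiableAt.differentiableWithinAt ?_
    set ε := a₀.re / 2 with hε
    have hε0 : 0 < ε := half_pos (show 0 < a₀.re from ha₀)
    have key := hasDerivAt_integral_of_dominated_loc_of_deriv_le (μ := volume.restrict (Ioi 0))
      (F := fun a (y : ℝ) => (y : ℂ) ^ (s - 1) * Complex.exp (-a * y))
      (F' := fun a (y : ℝ) => (y : ℂ) ^ (s + 1 - 1) * Complex.exp (-a * y) * (-1))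
      (x₀ := a₀) (bound := fun y : ℝ => y ^ ((s + 1).re - 1) * Real.exp (-ε * y))
      (Metric.ball_mem_nhds a₀ hε0) ?_ ?_ ?_ ?_ ?_ ?_
    · exact key.2.differentiableAt
    · filter_upwards with a using meas_aux s a
    · exact intOn_complex hs (by simpa [hU] using ha₀)
    · exact ((meas_aux (s+1) a₀).mul_const (-1))
    · filter_upwards [ae_restrict_mem measurableSet_Ioi] with y hy
      intro a haball
      have hare : ε ≤ a.re := by
        have := Complex.abs_re_le_norm (a - a₀)
        have hd := mem_ball_iff_norm.mp haball
        have : |a.re - a₀.re| < ε := by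
          calc |a.re - a₀.re| = |(a - a₀).re| := by simp [Complex.sub_re]
          _ ≤ ‖a - a₀‖ := Complex.abs_re_le_norm _
          _ < ε := hd
        have := abs_lt.mp this
        simp only [hε] at *
        linarith
      rw [norm_mul, norm_mul, norm_neg, norm_one, mul_one,
        Complex.norm_cpow_eq_rpow_re_of_pos hy, Complex.norm_exp]
      have h1 : (s + 1 - 1).re = (s + 1).re - 1 := by simp [Complex.sub_re]
      rw [h1]
      refine mul_le_mul_of_nonneg_left ?_ (Real.rpow_nonneg hy.le _)
      rw [Real.exp_le_exp]
      have : (-a * (y:ℂ)).re = -a.re * y := by simp [Complex.mul_re]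
      rw [this]
      have := hare
      nlinarith [hy.out]
    · exact (intOn_real (by simp [Complex.add_re]; linarith) hε0)
    · filter_upwards [ae_restrict_mem measurableSet_Ioi] with y hy
      intro a _
      have h1 : HasDerivAt (fun a : ℂ => Complex.exp (-a * y)) (Complex.exp (-a * y) * (-y)) a := by
        have : HasDerivAt (fun a : ℂ => -a * (y:ℂ)) (-y) a := by
          simpa using ((hasDerivAt_id a).neg.mul_const (y:ℂ))
        exact this.cexp
      have h2 := h1.const_mul ((y:ℂ) ^ (s - 1))
      refine h2.congr_deriv ?_
      have hy0 : (y:ℂ) ≠ 0 := Complex.ofReal_ne_zero.mpr hy.ne'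
      rw [show s + 1 - 1 = (s - 1) + 1 by ring, Complex.cpow_add _ _ hy0, Complex.cpow_one]
      ring
  have hGdiff : DifferentiableOn ℂ G U := by
    intro a ha
    refine DifferentiableAt.differentiableWithinAt ?_
    refine DifferentiableAt.mul_const ?_ _
    exact DifferentiableAt.cpow differentiableAt_id (differentiableAt_const _)
      (Or.inl (show 0 < a.re from ha))
  have hreal : ∀ r : ℝ, 0 < r → F r = G r := by
    intro r hr
    have h1 := Complex.integral_cpow_mul_exp_neg_mul_Ioi hs hr
    simp only [hF, hG]
    rw [show (fun y : ℝ => (y:ℂ) ^ (s-1) * Complex.exp (-(r:ℂ) * y)) =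
      (fun y : ℝ => (y:ℂ) ^ (s-1) * Complex.exp (-((r:ℂ) * y))) by funext y; rw [neg_mul], h1,
      one_div, Complex.inv_cpow _ _ (by
        rw [Complex.arg_ofReal_of_nonneg hr.le]
        exact Ne.symm Real.pi_ne_zero), ← Complex.cpow_neg]
  have hseq : Filter.Tendsto (fun n : ℕ => ((1 + ((n:ℝ)+1)⁻¹ : ℝ) : ℂ)) Filter.atTop
      (nhdsWithin 1 {(1:ℂ)}ᶜ) := by
    apply tendsto_nhdsWithin_of_tendsto_nhds_of_eventually_within
    · have h0 : Filter.Tendsto (fun n : ℕ => (1 + ((n:ℝ)+1)⁻¹ : ℝ)) Filter.atTop (nhds 1) := by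
        have := tendsto_one_div_add_atTop_nhds_zero_nat (𝕜 := ℝ)
        simp only [one_div] at this
        simpa using (tendsto_const_nhds (x := (1:ℝ))).add this
      have h2 := (Complex.continuous_ofReal.tendsto (1:ℝ)).comp h0
      rw [Complex.ofReal_one] at h2
      exact h2.congr (fun n => by simp [Function.comp])
    · filter_upwards with n
      simp only [Set.mem_compl_iff, Set.mem_singleton_iff]
      intro h
      have : (1 + ((n:ℝ)+1)⁻¹ : ℝ) = 1 := by exact_mod_cast h
      have h2 : ((n:ℝ)+1)⁻¹ > 0 := by positivity
      linarith
  have hfreq : ∃ᶠ z in nhdsWithin (1:ℂ) {(1:ℂ)}ᶜ, F z = G z := by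
    refine hseq.frequently (Filter.Frequently.of_forall fun n => ?_)
    exact hreal _ (by positivity)
  have heq := AnalyticOnNhd.eqOn_of_preconnected_of_frequently_eq
    (hFdiff.analyticOnNhd hUopen) (hGdiff.analyticOnNhd hUopen)
    ((convex_halfSpace_re_gt (r := 0)).isPreconnected) (show (1:ℂ) ∈ U by simp [hU]) hfreq
  exact fun a ha => heq ha

lemma intOn_Iio_of_neg {f : ℝ → ℂ} (hf : IntegrableOn (fun x => f (-x)) (Ioi (1:ℝ))) :
    IntegrableOn f (Iio (-1:ℝ)) := by
  have h1 := (integrable_indicator_iff measurableSet_Ioi).mpr hf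
  have h2 := h1.comp_neg
  have h3 : (fun w => ((Ioi (1:ℝ)).indicator (fun x => f (-x))) (-w)) = (Iio (-1:ℝ)).indicator f := by
    funext w
    by_cases hw : w < -1
    · rw [Set.indicator_of_mem (by simpa [mem_Ioi] using by linarith : -w ∈ Ioi (1:ℝ)),
        Set.indicator_of_mem (by simpa using hw)]
      simp
    · rw [Set.indicator_of_notMem (by simp [mem_Ioi]; linarith),
        Set.indicator_of_notMem (by simpa using hw)]
  rw [h3] at h2
  exact (integrable_indicator_iff measurableSet_Iio).mp h2

lemma fourier_integrable {g : ℝ → ℂ} (hg : Integrable g) (hd : Differentiable ℝ g)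
    (hg' : Integrable (deriv g)) (hd' : Differentiable ℝ (deriv g))
    (hg'' : Integrable (deriv (deriv g))) : Integrable (FourierTransform.fourier g) := by
  have hnorm : ∀ (f : ℝ → ℂ) (w : ℝ), ‖FourierTransform.fourier f w‖ ≤ ∫ v, ‖f v‖ := by
    intro f w
    exact VectorFourier.norm_fourierIntegral_le_integral_norm _ _ _ _ _
  have h1 := Real.fourier_deriv hg hd hg'
  have h2 := Real.fourier_deriv hg' hd' hg''
  set B := ∫ v, ‖deriv (deriv g) v‖ with hB
  have hBnn : 0 ≤ B := integral_nonneg fun v => norm_nonneg _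
  have hcont : Continuous (FourierTransform.fourier g) :=
    VectorFourier.fourierIntegral_continuous Real.continuous_fourierChar
      (by exact continuous_inner) hg
  have hnw : ∀ w : ℝ, ‖(2*(π:ℂ)*Complex.I*(w:ℂ))‖ = 2*π*|w| := by
    intro w
    simp [norm_mul, _root_.abs_of_nonneg Real.pi_nonneg]
  have hbound : ∀ w : ℝ, 1 ≤ |w| → ‖FourierTransform.fourier g w‖ ≤ B * |w|⁻¹ ^ 2 := by
    intro w hw
    have hw1 : (0:ℝ) < |w| := lt_of_lt_of_le one_pos hw
    have hπ : (1:ℝ) ≤ 2 * π := by nlinarith [Real.pi_gt_three]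
    have e1 : FourierTransform.fourier (deriv (deriv g)) w
        = (2 * π * Complex.I * w) • ((2 * π * Complex.I * w) • FourierTransform.fourier g w) := by
      rw [h2, h1]
    have e2 : ‖FourierTransform.fourier (deriv (deriv g)) w‖
        = (2 * π * |w|) ^ 2 * ‖FourierTransform.fourier g w‖ := by
      rw [e1, norm_smul, norm_smul, hnw]
      ring
    have e3 := hnorm (deriv (deriv g)) w
    rw [e2] at e3
    have hq : (0:ℝ) < (2*π*|w|)^2 := by positivity
    rw [mul_comm, ← le_div_iff₀ hq] at e3
    refine e3.trans ?_
    rw [div_le_iff₀ hq]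
    have heq : B * |w|⁻¹ ^ 2 * (2*π*|w|)^2 = B * (2*π)^2 := by
      calc B * |w|⁻¹ ^ 2 * (2*π*|w|)^2 = B * (2*π)^2 * (|w|⁻¹ * |w|)^2 := by ring
        _ = B * (2*π)^2 := by rw [inv_mul_cancel₀ hw1.ne']; ring
    rw [heq]
    nlinarith [mul_nonneg hBnn (show (0:ℝ) ≤ (2*π)^2 - 1 by nlinarith)]
  have hIcc : IntegrableOn (FourierTransform.fourier g) (Icc (-1:ℝ) 1) :=
    hcont.integrableOn_Icc
  have hIoi : IntegrableOn (FourierTransform.fourier g) (Ioi (1:ℝ)) := by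
    refine Integrable.mono' ((integrableOn_Ioi_rpow_of_lt (show (-2:ℝ) < -1 by norm_num)
      one_pos).const_mul B) hcont.aestronglyMeasurable.restrict ?_
    filter_upwards [ae_restrict_mem measurableSet_Ioi] with w (hw : 1 < w)
    have h0 : (0:ℝ) < w := lt_trans one_pos hw
    have := hbound w (by rw [_root_.abs_of_pos h0]; exact hw.le)
    rw [_root_.abs_of_pos h0] at this
    refine this.trans (le_of_eq ?_)
    rw [Real.rpow_neg h0.le, show (2:ℝ) = ((2:ℕ):ℝ) by norm_num, Real.rpow_natCast]
    simp [inv_pow]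
  have hIio : IntegrableOn (FourierTransform.fourier g) (Iio (-1:ℝ)) := by
    apply intOn_Iio_of_neg
    refine Integrable.mono' ((integrableOn_Ioi_rpow_of_lt (show (-2:ℝ) < -1 by norm_num)
      one_pos).const_mul B) (hcont.comp continuous_neg).aestronglyMeasurable.restrict ?_
    filter_upwards [ae_restrict_mem measurableSet_Ioi] with w (hw : 1 < w)
    have h0 : (0:ℝ) < w := lt_trans one_pos hw
    have := hbound (-w) (by rw [abs_neg, _root_.abs_of_pos h0]; exact hw.le)
    rw [abs_neg, _root_.abs_of_pos h0] at this
    refine this.trans (le_of_eq ?_)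
    rw [Real.rpow_neg h0.le, show (2:ℝ) = ((2:ℕ):ℝ) by norm_num, Real.rpow_natCast]
    simp [inv_pow]
  have hsets : Iio (-1:ℝ) ∪ (Icc (-1) 1 ∪ Ioi 1) = univ := by
    ext w; simp only [mem_union, mem_Iio, mem_Icc, mem_Ioi, mem_univ, iff_true]
    rcases lt_trichotomy w (-1) with h|h|h
    · exact Or.inl h
    · exact Or.inr (Or.inl ⟨h.ge, by linarith⟩)
    · rcases le_or_gt w 1 with h2|h2
      · exact Or.inr (Or.inl ⟨h.le, h2⟩)
      · exact Or.inr (Or.inr h2)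
  rw [← integrableOn_univ, ← hsets]
  exact hIio.union (hIcc.union hIoi)

lemma g_package (a : ℂ) (ha : 0 < a.re) (c : ℝ) (hc : 0 < c) :
    Integrable (FourierTransform.fourier
      (fun u : ℝ => Real.exp (-c * u) • Complex.exp (-a * (Real.exp (-u) : ℝ)))) := by
  set ψ : ℝ → ℝ → ℝ := fun b u => Real.exp (-b * u - a.re * Real.exp (-u)) with hψdef
  have hψ : ∀ b u, Real.exp (-u) * ψ b u = ψ (b+1) u := by
    intro b u
    rw [hψdef, ← Real.exp_add]
    ring_nf
  set φ : ℝ → ℂ := fun u => -(c:ℂ) * u - a * (Real.exp (-u) : ℝ) with hφdef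
  set g : ℝ → ℂ := fun u => Complex.exp (φ u) with hgdef
  have hgeq : (fun u : ℝ => Real.exp (-c * u) • Complex.exp (-a * (Real.exp (-u) : ℝ))) = g := by
    funext u
    rw [hgdef, hφdef]
    simp only [Complex.real_smul]
    rw [show ((Real.exp (-c*u) : ℝ) : ℂ) = Complex.exp ((( -c*u : ℝ)) : ℂ) by
      rw [Complex.ofReal_exp], ← Complex.exp_add]
    push_cast
    ring_nf
  rw [hgeq]
  set P : ℝ → ℂ := fun u => -(c:ℂ) + a * (Real.exp (-u) : ℝ) with hPdef
  set Q : ℝ → ℂ := fun u => -(a * (Real.exp (-u) : ℝ)) with hQdef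
  have hexp : ∀ u : ℝ, HasDerivAt (fun u : ℝ => Real.exp (-u)) (-Real.exp (-u)) u := by
    intro u
    simpa [Function.comp_def] using (Real.hasDerivAt_exp (-u)).comp u (hasDerivAt_neg u)
  have hexpC : ∀ u : ℝ, HasDerivAt (fun u : ℝ => ((Real.exp (-u) : ℝ) : ℂ))
      ((-Real.exp (-u) : ℝ) : ℂ) u := fun u => (hexp u).ofReal_comp
  have hid : ∀ u : ℝ, HasDerivAt (fun u : ℝ => ((u : ℝ) : ℂ)) 1 u := by
    intro u
    simpa using (hasDerivAt_id u).ofReal_comp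
  have hφ : ∀ u, HasDerivAt φ (P u) u := by
    intro u
    have h1 := (hid u).const_mul (-(c:ℂ))
    have h2 := (hexpC u).const_mul a
    have := h1.sub h2
    simp only [hφdef, hPdef]
    refine this.congr_deriv ?_
    push_cast
    ring
  have hg : ∀ u, HasDerivAt g (P u * g u) u := by
    intro u
    simpa [hgdef, mul_comm] using (hφ u).cexp
  have hP : ∀ u, HasDerivAt P (Q u) u := by
    intro u
    have h2 := (hexpC u).const_mul a
    have := (hasDerivAt_const u (-(c:ℂ))).add h2
    simp only [hPdef, hQdef]
    refine this.congr_deriv ?_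
    push_cast
    ring
  have hg2 : ∀ u, HasDerivAt (fun u => P u * g u) (Q u * g u + P u * (P u * g u)) u :=
    fun u => (hP u).mul (hg u)
  have hderiv1 : deriv g = fun u => P u * g u := funext fun u => (hg u).deriv
  have hderiv2 : deriv (deriv g) = fun u => Q u * g u + P u * (P u * g u) := by
    rw [hderiv1]; exact funext fun u => (hg2 u).deriv
  have hnormg : ∀ u, ‖g u‖ = ψ c u := by
    intro u
    rw [hgdef, Complex.norm_exp, hφdef, hψdef]
    congr 1
    simp [Complex.sub_re, Complex.mul_re, -Complex.ofReal_exp]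
  have hcontg : Continuous g := by
    have : Differentiable ℝ g := fun u => (hg u).differentiableAt
    exact this.continuous
  have hcontP : Continuous P := by
    have : Differentiable ℝ P := fun u => (hP u).differentiableAt
    exact this.continuous
  have hcontQ : Continuous Q := by
    rw [hQdef]
    continuity
  have hnormP : ∀ u, ‖P u‖ ≤ |c| + ‖a‖ * Real.exp (-u) := by
    intro u
    refine (norm_add_le _ _).trans ?_
    simp [norm_mul, Complex.norm_real, Real.abs_exp, -Complex.ofReal_exp]
  have hnormQ : ∀ u, ‖Q u‖ = ‖a‖ * Real.exp (-u) := by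
    intro u
    simp [hQdef, norm_mul, Complex.norm_real, Real.abs_exp, -Complex.ofReal_exp]
  have hψnn : ∀ b u, 0 ≤ ψ b u := fun b u => (Real.exp_pos _).le
  have hInt : ∀ b : ℝ, 0 < b → Integrable (ψ b) := fun b hb => int_aux hb ha
  -- Integrable g
  have hg_int : Integrable g := by
    refine Integrable.mono' (hInt c hc) hcontg.aestronglyMeasurable ?_
    filter_upwards with u
    rw [hnormg u]
  -- Integrable deriv g
  have hg'_int : Integrable (deriv g) := by
    rw [hderiv1]
    refine Integrable.mono' (((hInt c hc).const_mul |c|).add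
      ((hInt (c+1) (by linarith)).const_mul ‖a‖)) (hcontP.mul hcontg).aestronglyMeasurable ?_
    filter_upwards with u
    rw [norm_mul, hnormg u]
    calc ‖P u‖ * ψ c u ≤ (|c| + ‖a‖ * Real.exp (-u)) * ψ c u :=
          mul_le_mul_of_nonneg_right (hnormP u) (hψnn c u)
      _ = |c| * ψ c u + ‖a‖ * (Real.exp (-u) * ψ c u) := by ring
      _ = |c| * ψ c u + ‖a‖ * ψ (c+1) u := by rw [hψ]
  -- Integrable deriv (deriv g)
  have hg''_int : Integrable (deriv (deriv g)) := by
    rw [hderiv2]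
    have hb1 : Integrable (fun u => ‖a‖ * ψ (c+1) u + (|c|^2 * ψ c u
        + 2 * |c| * ‖a‖ * ψ (c+1) u + ‖a‖^2 * ψ (c+2) u)) := by
      refine ((hInt (c+1) (by linarith)).const_mul ‖a‖).add ?_
      exact (((hInt c hc).const_mul _).add ((hInt (c+1) (by linarith)).const_mul _)).add
        ((hInt (c+2) (by linarith)).const_mul _)
    refine Integrable.mono' hb1 ?_ ?_
    · exact ((hcontQ.mul hcontg).add (hcontP.mul (hcontP.mul hcontg))).aestronglyMeasurable
    filter_upwards with u
    refine (norm_add_le _ _).trans ?_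
    rw [norm_mul, norm_mul, norm_mul, hnormg u, hnormQ u]
    have h1 : ‖a‖ * Real.exp (-u) * ψ c u = ‖a‖ * ψ (c+1) u := by
      rw [mul_assoc, hψ]
    have h2 : ‖P u‖ * (‖P u‖ * ψ c u) ≤ |c|^2 * ψ c u + 2 * |c| * ‖a‖ * ψ (c+1) u
        + ‖a‖^2 * ψ (c+2) u := by
      have hPn : 0 ≤ ‖P u‖ := norm_nonneg _
      have hb := hnormP u
      have e1 : Real.exp (-u) * ψ c u = ψ (c+1) u := hψ c u
      have e2 : Real.exp (-u) * ψ (c+1) u = ψ (c+2) u := by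
        have := hψ (c+1) u
        rwa [show c+1+1 = c+2 by ring] at this
      have key : ‖P u‖ * (‖P u‖ * ψ c u) ≤ (|c| + ‖a‖ * Real.exp (-u))
          * ((|c| + ‖a‖ * Real.exp (-u)) * ψ c u) := by
        have h3 : 0 ≤ |c| + ‖a‖ * Real.exp (-u) := by positivity
        nlinarith [hψnn c u, mul_le_mul_of_nonneg_right hb (hψnn c u)]
      refine key.trans (le_of_eq ?_)
      calc (|c| + ‖a‖ * Real.exp (-u)) * ((|c| + ‖a‖ * Real.exp (-u)) * ψ c u)
          = |c|^2 * ψ c u + 2 * |c| * ‖a‖ * (Real.exp (-u) * ψ c u)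
            + ‖a‖^2 * (Real.exp (-u) * (Real.exp (-u) * ψ c u)) := by ring
        _ = _ := by rw [e1, e2]
    linarith
  exact fourier_integrable hg_int (fun u => (hg u).differentiableAt) hg'_int
    (by rw [hderiv1]; exact fun u => (hg2 u).differentiableAt) hg''_int

lemma master (a : ℂ) (ha : 0 < a.re) (c : ℝ) (hc : 0 < c) :
    Integrable (fun y : ℝ =>
      a ^ (-((c:ℂ) + (y:ℂ) * Complex.I)) * Complex.Gamma ((c:ℂ) + (y:ℂ) * Complex.I)) ∧
    (1 / (2 * (Real.pi : ℂ))) * ∫ y : ℝ,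
      a ^ (-((c:ℂ) + (y:ℂ) * Complex.I)) * Complex.Gamma ((c:ℂ) + (y:ℂ) * Complex.I)
      = Complex.exp (-a) := by
  set f : ℝ → ℂ := fun t => Complex.exp (-a * t) with hfdef
  have hre : ∀ y : ℝ, ((c:ℂ) + (y:ℂ) * Complex.I).re = c := by
    intro y; simp
  have him : ∀ y : ℝ, ((c:ℂ) + (y:ℂ) * Complex.I).im = y := by
    intro y; simp
  have hmelval : ∀ s : ℂ, 0 < s.re → mellin f s = a ^ (-s) * Complex.Gamma s := by
    intro s hs
    rw [mellin, ← gamma_int hs a ha]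
    simp_rw [smul_eq_mul]
    rfl
  have hmc : MellinConvergent f (c : ℂ) := by
    have := intOn_complex (s := (c:ℂ)) (by simpa using hc) ha
    refine this.congr_fun (fun y hy => ?_) measurableSet_Ioi
    simp only [smul_eq_mul, hfdef, neg_mul]
  have hvert : Complex.VerticalIntegrable (mellin f) c := by
    have hint : Integrable (fun y : ℝ => FourierTransform.fourier
        (fun u : ℝ => Real.exp (-c * u) • Complex.exp (-a * (Real.exp (-u) : ℝ)))
        (y / (2 * Real.pi))) := by
      have h2π : (2 * Real.pi)⁻¹ ≠ 0 := by positivity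
      have := (g_package a ha c hc).comp_mul_right' h2π
      refine this.congr ?_
      filter_upwards with y
      rw [div_eq_mul_inv]
    refine hint.congr ?_
    filter_upwards with y
    rw [mellin_eq_fourier]
    rw [hre, him]
  have hcont : ContinuousAt f 1 := by
    apply Continuous.continuousAt
    exact Complex.continuous_exp.comp (continuous_const.mul Complex.continuous_ofReal)
  have hinv := mellinInv_mellin_eq c f one_pos hmc hvert hcont
  have hf1 : f 1 = Complex.exp (-a) := by simp [hfdef]
  rw [hf1] at hinv
  rw [mellinInv] at hinv
  simp only [Complex.ofReal_one, one_cpow, one_smul] at hinv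
  have hmel : ∀ y : ℝ, mellin f ((c:ℂ) + (y:ℂ) * Complex.I)
      = a ^ (-((c:ℂ) + (y:ℂ) * Complex.I)) * Complex.Gamma ((c:ℂ) + (y:ℂ) * Complex.I) := by
    intro y
    exact hmelval _ (by rw [hre]; exact hc)
  constructor
  · refine hvert.congr ?_
    filter_upwards with y
    rw [hmel y]
  · rw [← hinv, Complex.real_smul]
    congr 1
    · push_cast
      ring
    · exact integral_congr_ae (by filter_upwards with y; rw [hmel y])

/-- e(x) = e^{2πix}. -/
noncomputable def e2pi (x : ℝ) : ℂ := Complex.exp (2 * Real.pi * Complex.I * x)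

/-- The Mellin–Barnes representation of `e(x)`: for each `0 < θ < π/2` the contour integral
over `Re(t) = c` converges absolutely, and it tends to `e(x)` as `θ → (π/2)⁻`. -/
theorem statement11 (x : ℝ) (hx : x ≠ 0) (c : ℝ) (hc : 0 < c) :
    (∀ θ : ℝ, 0 < θ → θ < Real.pi / 2 →
      Integrable (fun s : ℝ =>
        ((|2 * Real.pi * x| : ℝ) : ℂ) ^ (-((c : ℂ) + (s : ℂ) * Complex.I)) *
          Complex.exp (Complex.I * ((c : ℂ) + (s : ℂ) * Complex.I) * (θ : ℂ) *
            ((Real.sign x : ℝ) : ℂ)) *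
          Complex.Gamma ((c : ℂ) + (s : ℂ) * Complex.I) * Complex.I)) ∧
    Filter.Tendsto (fun θ : ℝ =>
        (1 / (2 * (Real.pi : ℂ) * Complex.I)) *
          ∫ s : ℝ,
            ((|2 * Real.pi * x| : ℝ) : ℂ) ^ (-((c : ℂ) + (s : ℂ) * Complex.I)) *
              Complex.exp (Complex.I * ((c : ℂ) + (s : ℂ) * Complex.I) * (θ : ℂ) *
                ((Real.sign x : ℝ) : ℂ)) *
              Complex.Gamma ((c : ℂ) + (s : ℂ) * Complex.I) * Complex.I)
      (nhdsWithin (Real.pi / 2) (Set.Iio (Real.pi / 2))) (nhds (e2pi x)) := by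
  have hπ2 : 0 < Real.pi / 2 := by positivity
  set r : ℝ := |2 * Real.pi * x| with hrdef
  have hr : 0 < r := by
    rw [hrdef]
    have h0 : 2 * Real.pi * x ≠ 0 := by
      have := Real.pi_ne_zero
      rcases lt_or_gt_of_ne hx with h | h <;> nlinarith [Real.pi_pos]
    exact abs_pos.mpr h0
  set σ : ℝ := Real.sign x with hσdef
  have hσ : σ = 1 ∨ σ = -1 := by
    rcases lt_or_gt_of_ne hx with h | h
    · exact Or.inr (Real.sign_of_neg h)
    · exact Or.inl (Real.sign_of_pos h)
  have hσabs : |σ| = 1 := by rcases hσ with h | h <;> rw [h] <;> norm_num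
  set A : ℝ → ℂ := fun θ => (r : ℂ) * Complex.exp (-(Complex.I * θ * σ)) with hAdef
  have hAexp : ∀ θ : ℝ, A θ
      = Complex.exp (((Real.log r : ℝ) : ℂ) + ((-(θ * σ) : ℝ) : ℂ) * Complex.I) := by
    intro θ
    rw [Complex.exp_add, ← Complex.ofReal_exp, Real.exp_log hr]
    show (r:ℂ) * Complex.exp (-(Complex.I * θ * σ)) = (r:ℂ) * Complex.exp (((-(θ * σ) : ℝ) : ℂ) * Complex.I)
    congr 2
    push_cast
    ring
  have hAre : ∀ θ : ℝ, |θ| < Real.pi / 2 → 0 < (A θ).re := by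
    intro θ hθ
    rw [hAexp θ, Complex.exp_re]
    have him : (((Real.log r : ℝ) : ℂ) + ((-(θ * σ) : ℝ) : ℂ) * Complex.I).im = -(θ * σ) := by
      simp [Complex.mul_I_im]
    have hre : (((Real.log r : ℝ) : ℂ) + ((-(θ * σ) : ℝ) : ℂ) * Complex.I).re = Real.log r := by
      simp [Complex.mul_I_re]
    rw [him, hre, Real.exp_log hr]
    have habs : |θ * σ| < Real.pi / 2 := by
      rw [abs_mul, hσabs, mul_one]; exact hθ
    have := abs_lt.mp habs
    have hcos : 0 < Real.cos (-(θ * σ)) :=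
      Real.cos_pos_of_mem_Ioo ⟨by linarith, by linarith⟩
    positivity
  have hAlog : ∀ θ : ℝ, |θ| < Real.pi / 2 →
      Complex.log (A θ) = ((Real.log r : ℝ) : ℂ) + ((-(θ * σ) : ℝ) : ℂ) * Complex.I := by
    intro θ hθ
    have habs : |θ * σ| < Real.pi / 2 := by
      rw [abs_mul, hσabs, mul_one]; exact hθ
    have h9 := abs_lt.mp habs
    have hpi := Real.pi_gt_three
    rw [hAexp θ]
    apply Complex.log_exp
    · simp only [Complex.add_im, Complex.ofReal_im, Complex.mul_I_im, Complex.ofReal_re]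
      linarith
    · simp only [Complex.add_im, Complex.ofReal_im, Complex.mul_I_im, Complex.ofReal_re]
      linarith
  -- integrand identity
  have hkey : ∀ θ : ℝ, |θ| < Real.pi / 2 → ∀ s : ℝ,
      ((r : ℝ) : ℂ) ^ (-((c : ℂ) + (s : ℂ) * Complex.I)) *
        Complex.exp (Complex.I * ((c : ℂ) + (s : ℂ) * Complex.I) * (θ : ℂ) * (σ : ℂ))
      = (A θ) ^ (-((c : ℂ) + (s : ℂ) * Complex.I)) := by
    intro θ hθ s
    set t : ℂ := (c : ℂ) + (s : ℂ) * Complex.I with htdef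
    have hAne' : A θ ≠ 0 := by rw [hAexp θ]; exact Complex.exp_ne_zero _
    rw [Complex.cpow_def_of_ne_zero hAne', hAlog θ hθ,
      Complex.cpow_def_of_ne_zero (Complex.ofReal_ne_zero.mpr hr.ne'),
      ← Complex.ofReal_log hr.le, ← Complex.exp_add]
    congr 1
    push_cast
    ring
  -- value identity for each good θ
  have hval : ∀ θ : ℝ, 0 < θ → θ < Real.pi / 2 →
      (1 / (2 * (Real.pi : ℂ) * Complex.I)) *
        ∫ s : ℝ, ((r : ℝ) : ℂ) ^ (-((c : ℂ) + (s : ℂ) * Complex.I)) *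
          Complex.exp (Complex.I * ((c : ℂ) + (s : ℂ) * Complex.I) * (θ : ℂ) * (σ : ℂ)) *
          Complex.Gamma ((c : ℂ) + (s : ℂ) * Complex.I) * Complex.I
      = Complex.exp (-(A θ)) := by
    intro θ hθ0 hθ1
    have hθabs : |θ| < Real.pi / 2 := by rw [abs_of_pos hθ0]; exact hθ1
    have hm := master (A θ) (hAre θ hθabs) c hc
    have he : (fun s : ℝ => ((r : ℝ) : ℂ) ^ (-((c : ℂ) + (s : ℂ) * Complex.I)) *
          Complex.exp (Complex.I * ((c : ℂ) + (s : ℂ) * Complex.I) * (θ : ℂ) * (σ : ℂ)) *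
          Complex.Gamma ((c : ℂ) + (s : ℂ) * Complex.I) * Complex.I)
        = (fun s : ℝ => (A θ) ^ (-((c : ℂ) + (s : ℂ) * Complex.I)) *
          Complex.Gamma ((c : ℂ) + (s : ℂ) * Complex.I) * Complex.I) := by
      funext s
      rw [hkey θ hθabs s]
    rw [he]
    have hI : ∫ s : ℝ, (A θ) ^ (-((c : ℂ) + (s : ℂ) * Complex.I)) *
        Complex.Gamma ((c : ℂ) + (s : ℂ) * Complex.I) * Complex.I
        = (∫ s : ℝ, (A θ) ^ (-((c : ℂ) + (s : ℂ) * Complex.I)) *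
          Complex.Gamma ((c : ℂ) + (s : ℂ) * Complex.I)) * Complex.I :=
      integral_mul_const _ _
    rw [hI, ← hm.2]
    have hπne : ((Real.pi : ℝ) : ℂ) ≠ 0 := Complex.ofReal_ne_zero.mpr Real.pi_ne_zero
    field_simp [Complex.I_ne_zero]
  constructor
  · -- integrability
    intro θ hθ0 hθ1
    have hθabs : |θ| < Real.pi / 2 := by rw [abs_of_pos hθ0]; exact hθ1
    have hm := (master (A θ) (hAre θ hθabs) c hc).1.mul_const Complex.I
    refine hm.congr ?_
    filter_upwards with s
    rw [← hkey θ hθabs s]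
  · -- the limit
    have hcontA : Continuous A := by
      rw [hAdef]
      continuity
    have hlim : Filter.Tendsto (fun θ : ℝ => Complex.exp (-(A θ)))
        (nhdsWithin (Real.pi / 2) (Set.Iio (Real.pi / 2))) (nhds (e2pi x)) := by
      have h1 : Continuous fun θ : ℝ => Complex.exp (-(A θ)) :=
        Complex.continuous_exp.comp hcontA.neg
      have h2 := (h1.tendsto (Real.pi / 2)).mono_left (nhdsWithin_le_nhds (s := Set.Iio (Real.pi / 2)))
      have h3 : Complex.exp (-(A (Real.pi / 2))) = e2pi x := by
        have hA2 : A (Real.pi / 2) = (r : ℂ) * Complex.exp (-(Complex.I * ((Real.pi / 2 : ℝ) : ℂ) * (σ : ℂ))) := rfl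
        rcases hσ with h | h
        · -- x > 0 : σ = 1, r = 2πx
          have hxpos : 0 < x := by
            rcases lt_or_gt_of_ne hx with h' | h'
            · have hsx : σ = -1 := by rw [hσdef]; exact Real.sign_of_neg h'
              rw [hsx] at h; norm_num at h
            · exact h'
          have hrval : r = 2 * Real.pi * x := by
            rw [hrdef, abs_of_pos (by positivity)]
          have hexp : Complex.exp (-(Complex.I * ((Real.pi / 2 : ℝ) : ℂ) * (σ : ℂ)))
              = -Complex.I := by
            rw [show -(Complex.I * ((Real.pi / 2 : ℝ) : ℂ) * (σ : ℂ))
              = ((-(Real.pi / 2 * σ) : ℝ) : ℂ) * Complex.I by push_cast; ring]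
            rw [Complex.exp_mul_I, ← Complex.ofReal_cos, ← Complex.ofReal_sin, h]
            simp [Real.cos_pi_div_two, Real.sin_pi_div_two]
          rw [hA2, hexp, hrval]
          show Complex.exp (-((((2 * Real.pi * x : ℝ)) : ℂ) * -Complex.I)) = e2pi x
          rw [e2pi]
          congr 1
          push_cast
          ring
        · -- x < 0 : σ = -1, r = -(2πx)
          have hxneg : x < 0 := by
            rcases lt_or_gt_of_ne hx with h' | h'
            · exact h'
            · have hsx : σ = 1 := by rw [hσdef]; exact Real.sign_of_pos h'
              rw [hsx] at h; norm_num at h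
          have hrval : r = -(2 * Real.pi * x) := by
            rw [hrdef, abs_of_neg (by nlinarith [Real.pi_pos])]
          have hexp : Complex.exp (-(Complex.I * ((Real.pi / 2 : ℝ) : ℂ) * (σ : ℂ)))
              = Complex.I := by
            rw [show -(Complex.I * ((Real.pi / 2 : ℝ) : ℂ) * (σ : ℂ))
              = ((-(Real.pi / 2 * σ) : ℝ) : ℂ) * Complex.I by push_cast; ring]
            rw [Complex.exp_mul_I, ← Complex.ofReal_cos, ← Complex.ofReal_sin, h]
            simp [Real.cos_pi_div_two, Real.sin_pi_div_two]
          rw [hA2, hexp, hrval]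
          show Complex.exp (-(((-(2 * Real.pi * x) : ℝ) : ℂ) * Complex.I)) = e2pi x
          rw [e2pi]
          congr 1
          push_cast
          ring
      rw [h3] at h2
      exact h2
    refine hlim.congr' ?_
    filter_upwards [Ioo_mem_nhdsLT_of_mem (⟨hπ2, le_refl _⟩ : Real.pi / 2 ∈ Ioc 0 (Real.pi / 2))]
      with θ hθ
    exact (hval θ hθ.1 hθ.2).symm
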